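/- Let f : ℝ² → ℝ be smooth, let a^f(x,y,p) = f_xx(x,y) + 2f_xy(x,y)p + f_yy(x,y)p², and let I(x,y,p) = (a^f)_x(x,y,p) + p·(a^f)_y(x,y,p) be the inflection function of a^f. Then ∂I/∂p (0,0,0) = 0 if and only if (a^f)_y(0,0,0) = 0 (equivalently, f_xxy(0,0) = 0); that is, the flec-surface of a^f has vertical tangent plane at the origin if and only if (a^f)_y(0,0,0) = 0. -/

import Mathlib

noncomputable section

/-- Partial derivative in the first variable of a function on `ℝ × ℝ`. -/
def pdx (f : ℝ × ℝ → ℝ) (q : ℝ × ℝ) : ℝ := deriv (fun t => f (t, q.2)) q.1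

/-- Partial derivative in the second variable of a function on `ℝ × ℝ`. -/
def pdy (f : ℝ × ℝ → ℝ) (q : ℝ × ℝ) : ℝ := deriv (fun t => f (q.1, t)) q.2

/-- Partial derivative in `x` of a function on `ℝ × ℝ × ℝ` (coordinates `(x, y, p)`). -/
def pDx (F : ℝ × ℝ × ℝ → ℝ) (q : ℝ × ℝ × ℝ) : ℝ := deriv (fun t => F (t, q.2.1, q.2.2)) q.1

/-- Partial derivative in `y` of a function on `ℝ × ℝ × ℝ` (coordinates `(x, y, p)`). -/
def pDy (F : ℝ × ℝ × ℝ → ℝ) (q : ℝ × ℝ × ℝ) : ℝ := deriv (fun t => F (q.1, t, q.2.2)) q.2.1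

/-- Partial derivative in `p` of a function on `ℝ × ℝ × ℝ` (coordinates `(x, y, p)`). -/
def pDp (F : ℝ × ℝ × ℝ → ℝ) (q : ℝ × ℝ × ℝ) : ℝ := deriv (fun t => F (q.1, q.2.1, t)) q.2.2

/-- The asymptotic IDE function `a^f(x,y,p) = f_xx + 2 f_xy p + f_yy p²`. -/
def aIDE (f : ℝ × ℝ → ℝ) (q : ℝ × ℝ × ℝ) : ℝ :=
  pdx (pdx f) (q.1, q.2.1) + 2 * pdy (pdx f) (q.1, q.2.1) * q.2.2
    + pdy (pdy f) (q.1, q.2.1) * q.2.2 ^ 2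

/-- The inflection function `I^F(x,y,p) = F_x + p·F_y`; its zero set is the flec-surface. -/
def inflFun (F : ℝ × ℝ × ℝ → ℝ) (q : ℝ × ℝ × ℝ) : ℝ := pDx F q + q.2.2 * pDy F q

/-- Lemma E: the flec-surface of `a^f` has vertical tangent plane at the
origin (`∂I/∂p (0) = 0`) iff `(a^f)_y(0,0,0) = 0`, equivalently `f_xxy(0,0) = 0`. -/
lemma hasDerivAt_line1 {g : ℝ × ℝ → ℝ} {q : ℝ × ℝ} (hg : DifferentiableAt ℝ g q) :
    HasDerivAt (fun t => g (t, q.2)) (fderiv ℝ g q (1, 0)) q.1 := by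
  have h := hg.hasFDerivAt.comp_hasDerivAt (l := g) q.1
    ((hasDerivAt_id q.1).prodMk (hasDerivAt_const q.1 q.2))
  exact h.congr_deriv (by simp)

lemma hasDerivAt_line2 {g : ℝ × ℝ → ℝ} {q : ℝ × ℝ} (hg : DifferentiableAt ℝ g q) :
    HasDerivAt (fun t => g (q.1, t)) (fderiv ℝ g q (0, 1)) q.2 := by
  have h := hg.hasFDerivAt.comp_hasDerivAt (l := g) q.2
    ((hasDerivAt_const q.2 q.1).prodMk (hasDerivAt_id q.2))
  exact h.congr_deriv (by simp)

lemma pdx_eq {g : ℝ × ℝ → ℝ} (hg : ContDiff ℝ (⊤:ℕ∞) g) (q : ℝ × ℝ) :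
    pdx g q = fderiv ℝ g q (1, 0) :=
  (hasDerivAt_line1 ((hg.differentiable (by simp)).differentiableAt)).deriv

lemma pdy_eq {g : ℝ × ℝ → ℝ} (hg : ContDiff ℝ (⊤:ℕ∞) g) (q : ℝ × ℝ) :
    pdy g q = fderiv ℝ g q (0, 1) :=
  (hasDerivAt_line2 ((hg.differentiable (by simp)).differentiableAt)).deriv

lemma contDiff_fderiv_apply {g : ℝ × ℝ → ℝ} (hg : ContDiff ℝ (⊤:ℕ∞) g) (v : ℝ × ℝ) :
    ContDiff ℝ (⊤:ℕ∞) (fun q => fderiv ℝ g q v) :=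
  (ContinuousLinearMap.apply ℝ ℝ v).contDiff.comp
    (hg.fderiv_right (m := ((⊤:ℕ∞) : WithTop ℕ∞)) (by simp))

lemma contDiff_pdx {g : ℝ × ℝ → ℝ} (hg : ContDiff ℝ (⊤:ℕ∞) g) :
    ContDiff ℝ (⊤:ℕ∞) (pdx g) := by
  have : pdx g = fun q => fderiv ℝ g q (1, 0) := funext (pdx_eq hg)
  rw [this]; exact contDiff_fderiv_apply hg _

lemma contDiff_pdy {g : ℝ × ℝ → ℝ} (hg : ContDiff ℝ (⊤:ℕ∞) g) :
    ContDiff ℝ (⊤:ℕ∞) (pdy g) := by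
  have : pdy g = fun q => fderiv ℝ g q (0, 1) := funext (pdy_eq hg)
  rw [this]; exact contDiff_fderiv_apply hg _

lemma fderiv_fderiv_apply {g : ℝ × ℝ → ℝ} (hg : ContDiff ℝ (⊤:ℕ∞) g) (v w q : ℝ × ℝ) :
    fderiv ℝ (fun a => fderiv ℝ g a v) q w = fderiv ℝ (fderiv ℝ g) q w v := by
  have h1 : DifferentiableAt ℝ (fderiv ℝ g) q :=
    (((hg.fderiv_right (m := ((⊤:ℕ∞) : WithTop ℕ∞)) (by simp))).differentiable (by simp)).differentiableAt
  have h := ((ContinuousLinearMap.apply ℝ ℝ v).hasFDerivAt.comp q h1.hasFDerivAt).fderiv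
  rw [show (fun a => fderiv ℝ g a v) = (ContinuousLinearMap.apply ℝ ℝ v) ∘ (fderiv ℝ g) from rfl, h]
  rfl

lemma sym_snd {g : ℝ × ℝ → ℝ} (hg : ContDiff ℝ (⊤:ℕ∞) g) (v w q : ℝ × ℝ) :
    fderiv ℝ (fderiv ℝ g) q v w = fderiv ℝ (fderiv ℝ g) q w v := by
  have h1 : DifferentiableAt ℝ (fderiv ℝ g) q :=
    (((hg.fderiv_right (m := ((⊤:ℕ∞) : WithTop ℕ∞)) (by simp))).differentiable (by simp)).differentiableAt
  exact second_derivative_symmetric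
    (fun y => ((hg.differentiable (by simp)).differentiableAt (x := y)).hasFDerivAt)
    h1.hasFDerivAt v w

lemma pdx_pdy_comm {g : ℝ × ℝ → ℝ} (hg : ContDiff ℝ (⊤:ℕ∞) g) (q : ℝ × ℝ) :
    pdx (pdy g) q = pdy (pdx g) q := by
  rw [pdx_eq (contDiff_pdy hg) q, pdy_eq (contDiff_pdx hg) q]
  have e1 : pdy g = fun a => fderiv ℝ g a (0, 1) := funext (pdy_eq hg)
  have e2 : pdx g = fun a => fderiv ℝ g a (1, 0) := funext (pdx_eq hg)
  rw [e1, e2, fderiv_fderiv_apply hg, fderiv_fderiv_apply hg, sym_snd hg]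

lemma hasDerivAt_pdx0 {g : ℝ × ℝ → ℝ} (hg : ContDiff ℝ (⊤:ℕ∞) g) :
    HasDerivAt (fun s : ℝ => g (s, 0)) (pdx g (0, 0)) 0 := by
  have H := hasDerivAt_line1 (q := ((0:ℝ), (0:ℝ)))
    ((hg.differentiable (by simp)).differentiableAt)
  rw [pdx_eq hg]; exact H

lemma hasDerivAt_pdy0 {g : ℝ × ℝ → ℝ} (hg : ContDiff ℝ (⊤:ℕ∞) g) :
    HasDerivAt (fun s : ℝ => g (0, s)) (pdy g (0, 0)) 0 := by
  have H := hasDerivAt_line2 (q := ((0:ℝ), (0:ℝ)))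
    ((hg.differentiable (by simp)).differentiableAt)
  rw [pdy_eq hg]; exact H

lemma pDx_aIDE (f : ℝ × ℝ → ℝ) (hf : ContDiff ℝ (⊤:ℕ∞) f) (t : ℝ) :
    pDx (aIDE f) (0, 0, t) = pdx (pdx (pdx f)) (0, 0)
      + 2 * pdx (pdy (pdx f)) (0, 0) * t + pdx (pdy (pdy f)) (0, 0) * t ^ 2 := by
  have h1 := hasDerivAt_pdx0 (contDiff_pdx (contDiff_pdx hf))
  have h2 := hasDerivAt_pdx0 (contDiff_pdy (contDiff_pdx hf))
  have h3 := hasDerivAt_pdx0 (contDiff_pdy (contDiff_pdy hf))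
  exact ((h1.add ((h2.const_mul 2).mul_const t)).add (h3.mul_const (t ^ 2))).deriv

lemma pDy_aIDE (f : ℝ × ℝ → ℝ) (hf : ContDiff ℝ (⊤:ℕ∞) f) (t : ℝ) :
    pDy (aIDE f) (0, 0, t) = pdy (pdx (pdx f)) (0, 0)
      + 2 * pdy (pdy (pdx f)) (0, 0) * t + pdy (pdy (pdy f)) (0, 0) * t ^ 2 := by
  have h1 := hasDerivAt_pdy0 (contDiff_pdx (contDiff_pdx hf))
  have h2 := hasDerivAt_pdy0 (contDiff_pdy (contDiff_pdx hf))
  have h3 := hasDerivAt_pdy0 (contDiff_pdy (contDiff_pdy hf))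
  exact ((h1.add ((h2.const_mul 2).mul_const t)).add (h3.mul_const (t ^ 2))).deriv

theorem lemmaE (f : ℝ × ℝ → ℝ) (hf : ContDiff ℝ (⊤ : ℕ∞) f) :
    (pDp (inflFun (aIDE f)) (0, 0, 0) = 0 ↔ pDy (aIDE f) (0, 0, 0) = 0) ∧
    (pDy (aIDE f) (0, 0, 0) = 0 ↔ pdy (pdx (pdx f)) (0, 0) = 0) := by
  set a := pdx (pdx (pdx f)) (0, 0)
  set b := pdx (pdy (pdx f)) (0, 0)
  set c := pdx (pdy (pdy f)) (0, 0)
  set d := pdy (pdx (pdx f)) (0, 0)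
  set e := pdy (pdy (pdx f)) (0, 0)
  set k := pdy (pdy (pdy f)) (0, 0)
  have hbd : b = d := pdx_pdy_comm (contDiff_pdx hf) (0, 0)
  have hDy0 : pDy (aIDE f) (0, 0, 0) = d := by
    have := pDy_aIDE f hf 0
    simpa using this
  have key : (fun t => inflFun (aIDE f) (0, 0, t))
      = fun t => (a + 2 * b * t + c * t ^ 2) + t * (d + 2 * e * t + k * t ^ 2) := by
    funext t
    show pDx (aIDE f) (0, 0, t) + t * pDy (aIDE f) (0, 0, t) = _
    rw [pDx_aIDE f hf t, pDy_aIDE f hf t]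
  have hp : HasDerivAt (fun t : ℝ => t ^ 2) (0 : ℝ) 0 := by
    simpa using hasDerivAt_pow 2 (0 : ℝ)
  have hpoly : HasDerivAt (fun t : ℝ => a + 2 * b * t + c * t ^ 2) (2 * b) 0 := by
    have := ((hasDerivAt_const (0:ℝ) a).add ((hasDerivAt_id (0:ℝ)).const_mul (2 * b))).add
      (hp.const_mul c)
    exact this.congr_deriv (by simp)
  have hq : HasDerivAt (fun t : ℝ => d + 2 * e * t + k * t ^ 2) (2 * e) 0 := by
    have := ((hasDerivAt_const (0:ℝ) d).add ((hasDerivAt_id (0:ℝ)).const_mul (2 * e))).add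
      (hp.const_mul k)
    exact this.congr_deriv (by simp)
  have hmul : HasDerivAt (fun t : ℝ => t * (d + 2 * e * t + k * t ^ 2)) d 0 := by
    have := (hasDerivAt_id (0:ℝ)).mul hq
    exact this.congr_deriv (by simp)
  have hDp : pDp (inflFun (aIDE f)) (0, 0, 0) = 2 * b + d := by
    show deriv (fun t => inflFun (aIDE f) (0, 0, t)) 0 = 2 * b + d
    rw [key]
    exact (hpoly.add hmul).deriv
  rw [hDp, hDy0, hbd]
  constructor
  · constructor <;> intro h <;> linarith
  · exact Iff.rfl
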